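/- Assume the axiom of choice. There exists a complete transitive binary relation on {0,1}^ℕ that satisfies Anonymity and Strong Pareto (hence also Upper Asymptotic Pareto): every partial order extends to a total order by Szpilrajn's extension theorem applied to the preorder generated by Pareto dominance and finite permutations. -/

import Mathlib

open Filter Topology

noncomputable def upperDensity (S : Set ℕ) : ℝ :=
  Filter.limsup (fun n : ℕ => (Nat.card (↥(S ∩ Set.Icc 1 n)) : ℝ) / (n : ℝ)) Filter.atTop

/-- Two sequences are related if they differ by a finitely supported permutation. -/
def permRel (x y : ℕ → Fin 2) : Prop :=
  ∃ σ : Equiv.Perm ℕ, {i | σ i ≠ i}.Finite ∧ y = x ∘ σ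

lemma permRel_refl (x : ℕ → Fin 2) : permRel x x :=
  ⟨Equiv.refl ℕ, by simp, rfl⟩

lemma permRel_symm {x y : ℕ → Fin 2} (h : permRel x y) : permRel y x := by
  obtain ⟨σ, hσ, rfl⟩ := h
  refine ⟨σ⁻¹, hσ.subset ?_, ?_⟩
  · intro i hi
    simp only [Set.mem_setOf_eq] at hi ⊢
    intro hcon
    apply hi
    conv_lhs => rw [← hcon]
    exact σ.symm_apply_apply i
  · funext i
    simp [Equiv.Perm.inv_def]

lemma permRel_trans {x y z : ℕ → Fin 2} (h1 : permRel x y) (h2 : permRel y z) :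
    permRel x z := by
  obtain ⟨σ, hσ, rfl⟩ := h1
  obtain ⟨τ, hτ, rfl⟩ := h2
  refine ⟨τ.trans σ, (hσ.union hτ).subset ?_, rfl⟩
  intro i hi
  simp only [Set.mem_setOf_eq, Equiv.trans_apply] at hi
  by_cases h : τ i = i
  · left; rw [h] at hi; exact hi
  · right; exact h

def permSetoid : Setoid (ℕ → Fin 2) :=
  ⟨permRel, permRel_refl, permRel_symm, permRel_trans⟩

/-- Key lemma: if x ≤ y pointwise and y is a finitely-supported permutation of x,
then x = y. -/
lemma eq_of_le_of_permRel {x y : ℕ → Fin 2} (hle : ∀ i, x i ≤ y i)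
    (h : permRel x y) : x = y := by
  obtain ⟨σ, hfin, rfl⟩ := h
  have hsum : ∑ i ∈ hfin.toFinset, (x (σ i) : ℕ) = ∑ i ∈ hfin.toFinset, (x i : ℕ) :=
    Equiv.Perm.sum_comp σ hfin.toFinset (fun i => ((x i : ℕ))) (by simp)
  have hle' : ∀ i ∈ hfin.toFinset, (x i : ℕ) ≤ (x (σ i) : ℕ) := fun i _ => hle i
  have heq : ∀ i ∈ hfin.toFinset, (x i : ℕ) = (x (σ i) : ℕ) :=
    (Finset.sum_eq_sum_iff_of_le hle').mp hsum.symm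
  funext i
  by_cases hi : σ i = i
  · simp [Function.comp, hi]
  · have := heq i (by simpa using hi)
    exact Fin.ext this

/-- The Pareto relation on the quotient. -/
def qle (a b : Quotient permSetoid) : Prop :=
  ∃ x y : ℕ → Fin 2, Quotient.mk permSetoid x = a ∧ Quotient.mk permSetoid y = b ∧
    ∀ i, x i ≤ y i

lemma permRel_comp (x : ℕ → Fin 2) (σ : Equiv.Perm ℕ) (hσ : {i | σ i ≠ i}.Finite) :
    permRel x (x ∘ σ) := ⟨σ, hσ, rfl⟩

instance qle_partialOrder : IsPartialOrder (Quotient permSetoid) qle where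
  refl a := by
    obtain ⟨x, rfl⟩ := Quotient.exists_rep a
    exact ⟨x, x, rfl, rfl, fun i => le_refl _⟩
  trans a b c := by
    rintro ⟨x, y, rfl, rfl, hxy⟩ ⟨y', z, hy', rfl, hyz⟩
    obtain ⟨σ, hσ, rfl⟩ : permRel y y' := Quotient.exact hy'.symm
    refine ⟨x ∘ σ, z, (Quotient.sound (permRel_comp x σ hσ)).symm, rfl, fun i => ?_⟩
    exact le_trans (hxy (σ i)) (hyz i)
  antisymm a b := by
    rintro ⟨x, y, rfl, rfl, hxy⟩ ⟨u, v, hu, hv, huv⟩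
    obtain ⟨σ, hσ, rfl⟩ : permRel y u := Quotient.exact hu.symm
    have hxv : permRel (x ∘ σ) v := by
      refine permRel_trans (permRel_symm (permRel_comp x σ hσ)) ?_
      exact (show permRel x v from Quotient.exact hv.symm)
    have hlexv : ∀ i, (x ∘ σ) i ≤ v i := fun i => le_trans (hxy (σ i)) (huv i)
    have hxveq : x ∘ σ = v := eq_of_le_of_permRel hlexv hxv
    have hyu : y ∘ σ = x ∘ σ := by
      funext i
      exact le_antisymm (hxveq ▸ huv i) (hxy (σ i))
    calc Quotient.mk permSetoid x
        = Quotient.mk permSetoid (x ∘ σ) := Quotient.sound (permRel_comp x σ hσ)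
      _ = Quotient.mk permSetoid (y ∘ σ) := by rw [hyu]
      _ = Quotient.mk permSetoid y := (Quotient.sound (permRel_comp y σ hσ)).symm

lemma swap_finite_support (i j : ℕ) : {k | Equiv.swap i j k ≠ k}.Finite := by
  apply ((Set.finite_singleton j).insert i).subset
  intro k hk
  simp only [Set.mem_setOf_eq] at hk
  by_contra hkij
  simp only [Set.mem_insert_iff, Set.mem_singleton_iff, not_or] at hkij
  exact hk (Equiv.swap_apply_of_ne_of_ne hkij.1 hkij.2)

lemma upperDensity_empty : upperDensity (∅ : Set ℕ) = 0 := by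
  unfold upperDensity
  have : (fun n : ℕ => (Nat.card (↥((∅ : Set ℕ) ∩ Set.Icc 1 n)) : ℝ) / (n : ℝ))
      = fun _ : ℕ => (0 : ℝ) := by
    funext n
    simp
  rw [this, Filter.limsup_const]

/-- (using the axiom of choice, via Szpilrajn's extension
theorem) there exists a complete transitive relation on {0,1}^ℕ satisfying
Anonymity and Strong Pareto, hence also Upper Asymptotic Pareto. -/
theorem stmt_18 :
    ∃ R : (ℕ → Fin 2) → (ℕ → Fin 2) → Prop,
      -- completeness
      (∀ x y, R x y ∨ R y x) ∧
      -- transitivity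
      (∀ x y z, R x y → R y z → R x z) ∧
      -- Anonymity
      (∀ (x : ℕ → Fin 2) (i j : ℕ),
        R x (x ∘ Equiv.swap i j) ∧ R (x ∘ Equiv.swap i j) x) ∧
      -- Strong Pareto
      (∀ x y : ℕ → Fin 2, (∀ i, y i ≤ x i) → x ≠ y → (R x y ∧ ¬ R y x)) ∧
      -- hence Upper Asymptotic Pareto
      (∀ x y : ℕ → Fin 2, (∀ i, y i ≤ x i) →
        ∀ S : Set ℕ, 0 < upperDensity S → (∀ i ∈ S, y i < x i) →
        (R x y ∧ ¬ R y x)) := by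
  obtain ⟨s, hlin, hle⟩ := extend_partialOrder qle
  haveI := hlin
  refine ⟨fun x y => s (Quotient.mk permSetoid y) (Quotient.mk permSetoid x),
    ?_, ?_, ?_, ?_, ?_⟩
  · intro x y
    exact (total_of s _ _).symm
  · intro x y z h1 h2
    exact trans_of s h2 h1
  · intro x i j
    have hq : Quotient.mk permSetoid (x ∘ Equiv.swap i j) = Quotient.mk permSetoid x :=
      (Quotient.sound (permRel_comp x (Equiv.swap i j) (swap_finite_support i j))).symm
    constructor
    · show s (Quotient.mk permSetoid (x ∘ Equiv.swap i j)) (Quotient.mk permSetoid x)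
      rw [hq]; exact refl_of s _
    · show s (Quotient.mk permSetoid x) (Quotient.mk permSetoid (x ∘ Equiv.swap i j))
      rw [hq]; exact refl_of s _
  · intro x y hyx hne
    have hq : qle (Quotient.mk permSetoid y) (Quotient.mk permSetoid x) :=
      ⟨y, x, rfl, rfl, hyx⟩
    refine ⟨hle _ _ hq, fun hcon => ?_⟩
    have heq : Quotient.mk permSetoid x = Quotient.mk permSetoid y :=
      antisymm_of s hcon (hle _ _ hq)
    have hperm : permRel y x := permRel_symm (Quotient.exact heq)
    exact hne (eq_of_le_of_permRel hyx hperm).symm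
  · intro x y hyx S hS hlt
    have hne : x ≠ y := by
      rintro rfl
      have hSne : S.Nonempty := by
        by_contra h
        rw [Set.not_nonempty_iff_eq_empty] at h
        rw [h, upperDensity_empty] at hS
        exact lt_irrefl 0 hS
      obtain ⟨i, hi⟩ := hSne
      exact lt_irrefl _ (hlt i hi)
    have hq : qle (Quotient.mk permSetoid y) (Quotient.mk permSetoid x) :=
      ⟨y, x, rfl, rfl, hyx⟩
    refine ⟨hle _ _ hq, fun hcon => ?_⟩
    have heq : Quotient.mk permSetoid x = Quotient.mk permSetoid y :=
      antisymm_of s hcon (hle _ _ hq)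
    have hperm : permRel y x := permRel_symm (Quotient.exact heq)
    exact hne (eq_of_le_of_permRel hyx hperm).symm
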